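/- Let A be a unital C*-algebra and let x, n ∈ A be selfadjoint elements that commute (nx = xn). Then the following three conditions hold simultaneously — (a) n − 1 ≥ 0, (b) n − x ≥ 0, (c) (n − 1)(n − x) = 0 — if and only if n = (1/2)(x + 1 + |x − 1|), where |y| denotes the absolute value of a selfadjoint element y (the square root of y² given by continuous functional calculus). In particular, the element (1/2)(x + 1 + |x − 1|) is the unique selfadjoint element commuting with x that satisfies (a), (b), (c). -/
import Mathlib


open scoped ComplexOrder

/-- In a unital C*-algebra, for commuting selfadjoint `x` and `n`, the conditions
(a) `n − 1 ≥ 0`, (b) `n − x ≥ 0`, (c) `(n−1)(n−x) = 0` hold simultaneously iff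
`n = (1/2)(x + 1 + |x − 1|)`, where `|y| = (y²)^{1/2}` via continuous functional
calculus.  In particular, `(1/2)(x + 1 + |x−1|)` is the unique selfadjoint element
commuting with `x` satisfying (a), (b), (c). -/
theorem stmt_6 {A : Type*} [CStarAlgebra A] [PartialOrder A] [StarOrderedRing A]
    (x : A) (hx : IsSelfAdjoint x) :
    (∀ n : A, IsSelfAdjoint n → n * x = x * n →
        ((0 ≤ n - 1 ∧ 0 ≤ n - x ∧ (n - 1) * (n - x) = 0) ↔
          n = (1 / 2 : ℂ) • (x + 1 + CFC.sqrt ((x - 1) ^ 2)))) ∧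
      (∃! n : A, IsSelfAdjoint n ∧ n * x = x * n ∧
        0 ≤ n - 1 ∧ 0 ≤ n - x ∧ (n - 1) * (n - x) = 0) := by
  have half : ∀ y : A, (1 / 2 : ℂ) • (y + y) = y := fun y => by
    rw [← two_smul ℂ y, smul_smul]; norm_num
  obtain ⟨a, ha_def⟩ : ∃ a : A, a = x - 1 := ⟨x - 1, rfl⟩
  rw [← ha_def]
  have hax : a + 1 = x := by rw [ha_def]; abel
  have ha : IsSelfAdjoint a := ha_def ▸ hx.sub (IsSelfAdjoint.one A)
  have h3 : a⁺ - a⁻ = a := CFC.posPart_sub_negPart a ha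
  have hx2 : x = a⁺ - a⁻ + 1 := by rw [h3]; exact hax.symm
  have hs : CFC.sqrt (a ^ 2) = a⁺ + a⁻ := by
    refine CFC.sqrt_unique ?_ (add_nonneg (CFC.posPart_nonneg a) (CFC.negPart_nonneg a))
    have h1 := CFC.posPart_mul_negPart a
    have h2 := CFC.negPart_mul_posPart a
    calc (a⁺ + a⁻) * (a⁺ + a⁻)
        = (a⁺ - a⁻) * (a⁺ - a⁻) + 2 * (a⁺ * a⁻) + 2 * (a⁻ * a⁺) := by noncomm_ring
      _ = (a⁺ - a⁻) * (a⁺ - a⁻) := by rw [h1, h2]; simp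
      _ = a ^ 2 := by rw [h3]; noncomm_ring
  have hform : (1 / 2 : ℂ) • (x + 1 + CFC.sqrt (a ^ 2)) = a⁺ + 1 := by
    rw [hs]
    have : x + 1 + (a⁺ + a⁻) = (a⁺ + 1) + (a⁺ + 1) := by rw [hx2]; abel
    rw [this, half]
  have hcommA : Commute a⁺ a := by
    have h := cfcₙ_commute_cfcₙ (·⁺ : ℝ → ℝ) id a
    rwa [cfcₙ_id ℝ a, ← CFC.posPart_def] at h
  have hcomm : Commute (a⁺ + 1) x := by
    rw [← hax]
    exact (hcommA.add_right (Commute.one_right _)).add_left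
      ((Commute.one_left a).add_right (Commute.one_right 1))
  have key : ∀ n : A, IsSelfAdjoint n → n * x = x * n →
      ((0 ≤ n - 1 ∧ 0 ≤ n - x ∧ (n - 1) * (n - x) = 0) ↔
        n = (1 / 2 : ℂ) • (x + 1 + CFC.sqrt (a ^ 2))) := by
    intro n hn _
    constructor
    · rintro ⟨hm, hk, hmk⟩
      have hm' : IsSelfAdjoint (n - 1) := .of_nonneg hm
      have hk' : IsSelfAdjoint (n - x) := .of_nonneg hk
      have hkm : (n - x) * (n - 1) = 0 := by
        have := congrArg star hmk
        rwa [star_mul, hm'.star_eq, hk'.star_eq, star_zero] at this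
      have hsn : CFC.sqrt (a ^ 2) = (n - 1) + (n - x) := by
        refine CFC.sqrt_unique ?_ (add_nonneg hm hk)
        calc ((n - 1) + (n - x)) * ((n - 1) + (n - x))
            = ((n - 1) - (n - x)) * ((n - 1) - (n - x))
              + 2 * ((n - 1) * (n - x)) + 2 * ((n - x) * (n - 1)) := by noncomm_ring
          _ = ((n - 1) - (n - x)) * ((n - 1) - (n - x)) := by rw [hmk, hkm]; simp
          _ = a ^ 2 := by rw [ha_def]; noncomm_ring
      rw [hsn]
      have : x + 1 + ((n - 1) + (n - x)) = n + n := by abel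
      rw [this, half]
    · intro hn'
      rw [hform] at hn'
      subst hn'
      have h1 : a⁺ + 1 - 1 = a⁺ := by abel
      have h2 : a⁺ + 1 - x = a⁻ := by rw [hx2]; abel
      refine ⟨by rw [h1]; exact CFC.posPart_nonneg a,
        by rw [h2]; exact CFC.negPart_nonneg a, ?_⟩
      rw [h1, h2, CFC.posPart_mul_negPart]
  have hsa : IsSelfAdjoint (a⁺ + 1) :=
    (IsSelfAdjoint.of_nonneg (CFC.posPart_nonneg a)).add (IsSelfAdjoint.one A)
  refine ⟨key, ⟨a⁺ + 1, ⟨hsa, hcomm.eq, (key (a⁺ + 1) hsa hcomm.eq).mpr hform.symm⟩, ?_⟩⟩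
  rintro n' ⟨hn', hc', hconds⟩
  have := (key n' hn' hc').mp hconds
  rw [this, hform]
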